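/- Let $G=(V,E)$ be a finite graph, $\delta$ a nonnegative distance function, and $\gamma$ a constant with $\gamma > \sum_{v\in V}\max_{u\in N(v)}\delta(v,u)$ (where every vertex has at least one neighbor). Then any dominating set $P_1$ with $|P_1| < |P_2|$ for another dominating set $P_2$ satisfies $\mathcal{L}(P_1) < \mathcal{L}(P_2)$. -/
import Mathlib


open Finset

/-- The sliding cost of a pivot set `P`: for each non-pivot vertex `v`, the
minimum distance to a pivot among the neighbors of `v` (0 if no such pivot). -/
noncomputable def slideCost {V : Type*} [Fintype V] [DecidableEq V]
    (G : SimpleGraph V) [DecidableRel G.Adj] (δ : V → V → ℝ) (P : Finset V) : ℝ :=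
  ∑ v ∈ Finset.univ \ P,
    if h : (P ∩ G.neighborFinset v).Nonempty then
      (P ∩ G.neighborFinset v).inf' h (δ v)
    else 0

/-- The total merge cost `L(P) = γ|P| + slideCost`. -/
noncomputable def mergeCost {V : Type*} [Fintype V] [DecidableEq V]
    (G : SimpleGraph V) [DecidableRel G.Adj] (δ : V → V → ℝ) (γ : ℝ)
    (P : Finset V) : ℝ :=
  γ * P.card + slideCost G δ P

/-- `P` is a dominating set: every vertex is in `P` or adjacent to a member of `P`. -/
def IsDominatingSet {V : Type*} (G : SimpleGraph V) (P : Finset V) : Prop :=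
  ∀ v : V, v ∈ P ∨ ∃ p ∈ P, G.Adj v p


theorem mergeCost_lt_of_card_lt {V : Type*} [Fintype V] [DecidableEq V]
    (G : SimpleGraph V) [DecidableRel G.Adj]
    (δ : V → V → ℝ) (γ : ℝ)
    (hδ : ∀ u v : V, 0 ≤ δ u v)
    (hne : ∀ v : V, (G.neighborFinset v).Nonempty)
    (hγ : γ > ∑ v : V, (G.neighborFinset v).sup' (hne v) (δ v))
    (P₁ P₂ : Finset V)
    (h₁ : IsDominatingSet G P₁) (h₂ : IsDominatingSet G P₂)
    (hcard : P₁.card < P₂.card) :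
    mergeCost G δ γ P₁ < mergeCost G δ γ P₂ := by
  have hsupnn : ∀ v : V, 0 ≤ (G.neighborFinset v).sup' (hne v) (δ v) := by
    intro v
    obtain ⟨u, hu⟩ := hne v
    exact le_trans (hδ v u) (Finset.le_sup' _ hu)
  have hSnn : 0 ≤ ∑ v : V, (G.neighborFinset v).sup' (hne v) (δ v) :=
    Finset.sum_nonneg fun v _ => hsupnn v
  have hγpos : 0 < γ := lt_of_le_of_lt hSnn hγ
  -- slideCost nonneg, for P₂
  have hsc2 : 0 ≤ slideCost G δ P₂ := by
    apply Finset.sum_nonneg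
    intro v _
    split
    · next h => exact Finset.le_inf' h _ fun b hb => hδ v b
    · exact le_refl 0
  -- slideCost P₁ ≤ S
  have hsc1 : slideCost G δ P₁ ≤ ∑ v : V, (G.neighborFinset v).sup' (hne v) (δ v) := by
    calc slideCost G δ P₁
        ≤ ∑ v ∈ Finset.univ \ P₁, (G.neighborFinset v).sup' (hne v) (δ v) := by
          apply Finset.sum_le_sum
          intro v _
          split
          · next h =>
            obtain ⟨p, hp⟩ := h
            refine le_trans (Finset.inf'_le _ hp) ?_
            exact Finset.le_sup' _ (Finset.mem_of_mem_inter_right hp)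
          · exact hsupnn v
      _ ≤ ∑ v : V, (G.neighborFinset v).sup' (hne v) (δ v) :=
          Finset.sum_le_sum_of_subset_of_nonneg (Finset.sdiff_subset)
            fun v _ _ => hsupnn v
  have hcard' : (P₁.card : ℝ) + 1 ≤ (P₂.card : ℝ) := by exact_mod_cast hcard
  have : γ * P₁.card + slideCost G δ P₁ < γ * P₂.card + slideCost G δ P₂ := by
    have h1 : γ * P₁.card + slideCost G δ P₁ < γ * P₁.card + γ :=
      by linarith [lt_of_le_of_lt hsc1 hγ]
    have h2 : γ * P₁.card + γ ≤ γ * P₂.card := by nlinarith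
    linarith
  simpa [mergeCost] using this
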